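/- Theorem (uniqueness for a single DRCCP with continuous reference distribution, p ∈ (1,∞)). For every t ∈ ℝ such that F_t ≠ ∅ and inf_{x∈F_t} F̂(x) > 0, the problem min_{x∈F_t} F̂(x) has at most one minimizer; i.e., the lower-level ALSO-X problem admits a unique optimal solution whenever its optimal value is positive. -/

import Mathlib

open MeasureTheory

lemma maxAddLe (u v : ℝ) : max (u + v) 0 ≤ max u 0 + max v 0 :=
  max_le (add_le_add (le_max_left _ _) (le_max_left _ _)) (by positivity)

lemma maxMul {μ u : ℝ} (hμ : 0 ≤ μ) : max (μ * u) 0 = μ * max u 0 := by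
  rcases le_or_gt u 0 with h | h
  · rw [max_eq_right (by nlinarith), max_eq_right h, mul_zero]
  · rw [max_eq_left (by nlinarith), max_eq_left h.le]

lemma maxHalf (u v : ℝ) : max ((u + v) / 2) 0 ≤ (max u 0 + max v 0) / 2 := by
  have h1 : (u + v) / 2 = (1/2) * (u + v) := by ring
  rw [h1, maxMul (by norm_num : (0:ℝ) ≤ 1/2)]
  linarith [maxAddLe u v]

lemma maxHalfEq {u v : ℝ} (h : (max u 0 + max v 0) / 2 ≤ max ((u + v) / 2) 0) :
    max u 0 + max v 0 = max (u + v) 0 := by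
  have h1 : (u + v) / 2 = (1/2) * (u + v) := by ring
  rw [h1, maxMul (by norm_num : (0:ℝ) ≤ 1/2)] at h
  exact le_antisymm (by linarith) (maxAddLe u v)

lemma signOfMaxEq {u v : ℝ} (h : max u 0 + max v 0 = max (u + v) 0) :
    (0 ≤ u ∧ 0 ≤ v) ∨ (u ≤ 0 ∧ v ≤ 0) := by
  rcases le_or_gt 0 u with hu | hu
  · rcases le_or_gt 0 v with hv | hv
    · exact Or.inl ⟨hu, hv⟩
    · rcases max_cases (u + v) 0 with ⟨h1, h2⟩ | ⟨h1, h2⟩ <;>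
        rw [max_eq_left hu, max_eq_right hv.le] at h <;>
        [left; right] <;> constructor <;> linarith
  · rcases le_or_gt 0 v with hv | hv
    · rcases max_cases (u + v) 0 with ⟨h1, h2⟩ | ⟨h1, h2⟩ <;>
        rw [max_eq_right hu.le, max_eq_left hv] at h <;>
        [left; right] <;> constructor <;> linarith
    · exact Or.inr ⟨hu.le, hv.le⟩

lemma signForcesEq {n : ℕ} (P : Measure (Fin n → ℝ)) [IsProbabilityMeasure P]
    (x₁ x₂ : Fin n → ℝ) (α β : ℝ)
    (hC : ∀ ζ : Fin n → ℝ,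
        (0 ≤ (∑ i, x₁ i * ζ i) + α ∧ 0 ≤ (∑ i, x₂ i * ζ i) + β) ∨
        ((∑ i, x₁ i * ζ i) + α ≤ 0 ∧ (∑ i, x₂ i * ζ i) + β ≤ 0))
    (hv : 0 < ∫ ζ, max ((∑ i, x₁ i * ζ i) + α) 0 ∂P)
    (heq : (∫ ζ, max ((∑ i, x₁ i * ζ i) + α) 0 ∂P)
         = ∫ ζ, max ((∑ i, x₂ i * ζ i) + β) 0 ∂P) :
    x₁ = x₂ := by
  have dotself_pos : ∀ y : Fin n → ℝ, y ≠ 0 → 0 < ∑ i, y i * y i := by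
    intro y hy
    rcases Function.ne_iff.mp hy with ⟨i, hi⟩
    exact Finset.sum_pos' (fun j _ => mul_self_nonneg _)
      ⟨i, Finset.mem_univ i, mul_self_pos.mpr hi⟩
  have dot_smul : ∀ (y z : Fin n → ℝ) (s : ℝ),
      (∑ i, z i * (s * y i)) = s * ∑ i, z i * y i := by
    intro y z s
    rw [Finset.mul_sum]
    exact Finset.sum_congr rfl fun i _ => by ring
  have dot_comb : ∀ (x y z : Fin n → ℝ) (s r : ℝ),
      (∑ i, x i * (s * y i - r * z i))
        = s * (∑ i, x i * y i) - r * (∑ i, x i * z i) := by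
    intro x y z s r
    rw [Finset.mul_sum, Finset.mul_sum, ← Finset.sum_sub_distrib]
    exact Finset.sum_congr rfl fun i _ => by ring
  by_cases h1 : x₁ = 0
  · have hα : 0 < α := by
      have e : (∫ ζ, max ((∑ i, x₁ i * ζ i) + α) 0 ∂P) = max α 0 := by simp [h1]
      rw [e] at hv
      rcases max_cases α (0:ℝ) with ⟨h2, _⟩ | ⟨h2, _⟩ <;> linarith [hv]
    by_cases h2 : x₂ = 0
    · rw [h1, h2]
    · exfalso
      have hDpos := dotself_pos x₂ h2
      have hdot : (∑ i, x₂ i * ((-(|β| + 1) / (∑ i, x₂ i * x₂ i)) * x₂ i))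
          = -(|β| + 1) := by
        rw [dot_smul]; exact div_mul_cancel₀ _ hDpos.ne'
      have hthis := hC (fun i => (-(|β| + 1) / (∑ i, x₂ i * x₂ i)) * x₂ i)
      simp only [h1, Pi.zero_apply, zero_mul, Finset.sum_const_zero, zero_add] at hthis
      rw [hdot] at hthis
      have hb := le_abs_self β
      rcases hthis with ⟨_, h⟩ | ⟨h, _⟩ <;> linarith
  · by_cases h2 : x₂ = 0
    · exfalso
      have hβ : 0 < β := by
        rw [heq] at hv
        have e : (∫ ζ, max ((∑ i, x₂ i * ζ i) + β) 0 ∂P) = max β 0 := by simp [h2]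
        rw [e] at hv
        rcases max_cases β (0:ℝ) with ⟨h3, _⟩ | ⟨h3, _⟩ <;> linarith [hv]
      have hDpos := dotself_pos x₁ h1
      have hdot : (∑ i, x₁ i * ((-(|α| + 1) / (∑ i, x₁ i * x₁ i)) * x₁ i))
          = -(|α| + 1) := by
        rw [dot_smul]; exact div_mul_cancel₀ _ hDpos.ne'
      have hthis := hC (fun i => (-(|α| + 1) / (∑ i, x₁ i * x₁ i)) * x₁ i)
      simp only [h2, Pi.zero_apply, zero_mul, Finset.sum_const_zero, zero_add] at hthis
      rw [hdot] at hthis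
      have ha := le_abs_self α
      rcases hthis with ⟨h, _⟩ | ⟨_, h⟩ <;> linarith
    · -- main case: both nonzero
      have hDpos := dotself_pos x₁ h1
      obtain ⟨μ, hμ⟩ : ∃ μ : ℝ, μ = (∑ i, x₁ i * x₂ i) / (∑ i, x₁ i * x₁ i) :=
        ⟨_, rfl⟩
      obtain ⟨w, hw⟩ : ∃ w : Fin n → ℝ, w = fun i => x₂ i - μ * x₁ i := ⟨_, rfl⟩
      have hwi : ∀ i, w i = x₂ i - μ * x₁ i := fun i => by rw [hw]
      have hx2w : ∀ i, x₂ i = μ * x₁ i + w i := fun i => by rw [hwi i]; ring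
      have horth : ∑ i, x₁ i * w i = 0 := by
        have e : ∑ i, x₁ i * w i
            = (∑ i, x₁ i * x₂ i) - μ * (∑ i, x₁ i * x₁ i) := by
          rw [Finset.mul_sum, ← Finset.sum_sub_distrib]
          exact Finset.sum_congr rfl fun i _ => by rw [hwi i]; ring
        rw [e, hμ]
        rw [div_mul_cancel₀ _ hDpos.ne', sub_self]
      have dot_x₂ : ∀ ζ : Fin n → ℝ,
          (∑ i, x₂ i * ζ i) = μ * (∑ i, x₁ i * ζ i) + ∑ i, w i * ζ i := by
        intro ζ
        rw [Finset.mul_sum, ← Finset.sum_add_distrib]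
        exact Finset.sum_congr rfl fun i _ => by rw [hx2w i]; ring
      -- w = 0
      have hwzero : ∀ i, w i = 0 := by
        by_contra hcon
        push_neg at hcon
        obtain ⟨j, hj⟩ := hcon
        have hW : 0 < ∑ i, w i * w i :=
          dotself_pos w (fun h => hj (by rw [h]; rfl))
        obtain ⟨s, hs⟩ : ∃ s : ℝ, s = (|α| + 1) / (∑ i, x₁ i * x₁ i) := ⟨_, rfl⟩
        obtain ⟨r, hr⟩ : ∃ r : ℝ,
            r = (μ * (|α| + 1) + β + 1) / (∑ i, w i * w i) := ⟨_, rfl⟩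
        have hsD : s * (∑ i, x₁ i * x₁ i) = |α| + 1 := by
          rw [hs]; exact div_mul_cancel₀ _ hDpos.ne'
        have hrW : r * (∑ i, w i * w i) = μ * (|α| + 1) + β + 1 := by
          rw [hr]; exact div_mul_cancel₀ _ hW.ne'
        have hd1 : (∑ i, x₁ i * (s * x₁ i - r * w i)) = |α| + 1 := by
          rw [dot_comb, horth, hsD]; ring
        have hd2 : (∑ i, x₂ i * (s * x₁ i - r * w i)) = μ * (|α| + 1) - (μ * (|α| + 1) + β + 1) := by
          have e1 : (∑ i, w i * (s * x₁ i - r * w i))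
              = s * (∑ i, w i * x₁ i) - r * (∑ i, w i * w i) := dot_comb _ _ _ _ _
          have e2 : (∑ i, w i * x₁ i) = 0 := by
            rw [← horth]
            exact Finset.sum_congr rfl fun i _ => mul_comm _ _
          rw [dot_x₂, hd1, e1, e2, hrW]; ring
        have hthis := hC (fun i => s * x₁ i - r * w i)
        rw [hd1, hd2] at hthis
        have ha := neg_abs_le α
        rcases hthis with ⟨_, h⟩ | ⟨h, _⟩ <;> linarith
      have hx2 : ∀ i, x₂ i = μ * x₁ i := fun i => by
        have := hx2w i; rw [hwzero i] at this; linarith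
      -- realising arbitrary dot values
      have key1 : ∀ u : ℝ, (∑ i, x₁ i * ((u / (∑ i, x₁ i * x₁ i)) * x₁ i)) = u := by
        intro u; rw [dot_smul]; exact div_mul_cancel₀ _ hDpos.ne'
      have key2 : ∀ u : ℝ, (∑ i, x₂ i * ((u / (∑ i, x₁ i * x₁ i)) * x₁ i)) = μ * u := by
        intro u
        have e : (∑ i, x₂ i * ((u / (∑ i, x₁ i * x₁ i)) * x₁ i))
            = μ * ∑ i, x₁ i * ((u / (∑ i, x₁ i * x₁ i)) * x₁ i) := by
          rw [Finset.mul_sum]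
          exact Finset.sum_congr rfl fun i _ => by rw [hx2 i]; ring
        rw [e, key1]
      have hμpos : 0 < μ := by
        rcases lt_trichotomy μ 0 with hneg | hzero | hpos
        · exfalso
          have ha : 0 < max (-α + 1) ((-β - 1) / μ) + α := by
            have := le_max_left (-α + 1) ((-β - 1) / μ); linarith
          have hb : μ * max (-α + 1) ((-β - 1) / μ) + β < 0 := by
            have hle : (-β - 1) / μ ≤ max (-α + 1) ((-β - 1) / μ) := le_max_right _ _
            have h2' : μ * max (-α + 1) ((-β - 1) / μ) ≤ μ * ((-β - 1) / μ) :=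
              mul_le_mul_of_nonpos_left hle hneg.le
            have h3 : μ * ((-β - 1) / μ) = -β - 1 := by
              rw [mul_comm]; exact div_mul_cancel₀ _ hneg.ne
            linarith
          have hthis := hC (fun i =>
            ((max (-α + 1) ((-β - 1) / μ)) / (∑ i, x₁ i * x₁ i)) * x₁ i)
          rw [key1, key2] at hthis
          rcases hthis with ⟨_, h⟩ | ⟨h, _⟩ <;> linarith
        · exact absurd (funext fun i => by simp [hx2 i, hzero] : x₂ = 0) h2
        · exact hpos
      have hβα : β = μ * α := by
        rcases lt_trichotomy β (μ * α) with hlt | heq' | hgt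
        · exfalso
          have hdiv : β / μ < α := by rw [div_lt_iff₀ hμpos]; nlinarith
          have ha : 0 < (-α - β / μ) / 2 + α := by linarith
          have hb : μ * ((-α - β / μ) / 2) + β < 0 := by
            have e : μ * ((-α - β / μ) / 2) = (-(μ * α) - β) / 2 := by
              field_simp
            rw [e]; nlinarith
          have hthis := hC (fun i =>
            (((-α - β / μ) / 2) / (∑ i, x₁ i * x₁ i)) * x₁ i)
          rw [key1, key2] at hthis
          rcases hthis with ⟨_, h⟩ | ⟨h, _⟩ <;> linarith
        · exact heq'
        · exfalso
          have hdiv : α < β / μ := by rw [lt_div_iff₀ hμpos]; nlinarith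
          have ha : (-α - β / μ) / 2 + α < 0 := by linarith
          have hb : 0 < μ * ((-α - β / μ) / 2) + β := by
            have e : μ * ((-α - β / μ) / 2) = (-(μ * α) - β) / 2 := by
              field_simp
            rw [e]; nlinarith
          have hthis := hC (fun i =>
            (((-α - β / μ) / 2) / (∑ i, x₁ i * x₁ i)) * x₁ i)
          rw [key1, key2] at hthis
          rcases hthis with ⟨h, _⟩ | ⟨_, h⟩ <;> linarith
      -- conclude μ = 1
      have hfun : (fun ζ : Fin n → ℝ => max ((∑ i, x₂ i * ζ i) + β) 0)
          = fun ζ => μ * max ((∑ i, x₁ i * ζ i) + α) 0 := by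
        funext ζ
        have e : (∑ i, x₂ i * ζ i) + β = μ * ((∑ i, x₁ i * ζ i) + α) := by
          have e2 : (∑ i, x₂ i * ζ i) = μ * ∑ i, x₁ i * ζ i := by
            rw [Finset.mul_sum]
            exact Finset.sum_congr rfl fun i _ => by rw [hx2 i]; ring
          rw [e2, hβα]; ring
        rw [e, maxMul hμpos.le]
      have hint : (∫ ζ, max ((∑ i, x₂ i * ζ i) + β) 0 ∂P)
          = μ * ∫ ζ, max ((∑ i, x₁ i * ζ i) + α) 0 ∂P := by
        rw [hfun]; exact integral_const_mul μ _
      have hI : (∫ ζ, max ((∑ i, x₁ i * ζ i) + α) 0 ∂P)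
          = μ * ∫ ζ, max ((∑ i, x₁ i * ζ i) + α) 0 ∂P := heq.trans hint
      have hz : (1 - μ) * (∫ ζ, max ((∑ i, x₁ i * ζ i) + α) 0 ∂P) = 0 := by
        linarith [hI]
      have hμ1 : μ = 1 := by
        rcases mul_eq_zero.mp hz with h | h
        · linarith
        · exfalso; linarith
      funext i
      rw [hx2 i, hμ1, one_mul]


/-- **Uniqueness for a single DRCCP with continuous reference distribution, `p ∈ (1,∞)`.**
For every level `t` at which the feasible region `F t = {x ∈ X : cᵀx ≤ t}` is nonempty and the
lower-level ALSO-X optimal value is positive, the lower-level ALSO-X problem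
`min_{x ∈ F t} F̂(x)` has at most one minimizer. -/
theorem single_drccp_lower_level_unique_pnorm
    (n : ℕ) (hn : 1 ≤ n)
    (c : Fin n → ℝ) (b₁ : ℝ) (θ : ℝ) (hθ : 0 ≤ θ)
    (p : ℝ) (hp : 1 < p)
    (X : Set (Fin n → ℝ)) (hX : Convex ℝ X)
    (P : Measure (Fin n → ℝ)) [IsProbabilityMeasure P]
    (hPint : Integrable (fun ζ : Fin n → ℝ => ‖ζ‖) P)
    -- `P` has a continuous, everywhere strictly positive density w.r.t. Lebesgue measure
    (ρ : (Fin n → ℝ) → ℝ) (hρc : Continuous ρ) (hρpos : ∀ z, 0 < ρ z)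
    (hPd : P = volume.withDensity fun z => ENNReal.ofReal (ρ z))
    -- the lower-level ALSO-X objective `F̂(x) = E_P[(θ‖x‖_p + xᵀζ - b₁)₊]`
    (Fhat : (Fin n → ℝ) → ℝ)
    (hFhat : ∀ x, Fhat x =
      ∫ ζ, max (θ * (∑ i, |x i| ^ p) ^ (1 / p) + ∑ i, x i * ζ i - b₁) 0 ∂P) :
    ∀ t : ℝ,
      ({x ∈ X | ∑ i, c i * x i ≤ t}).Nonempty →
      0 < sInf (Fhat '' {x ∈ X | ∑ i, c i * x i ≤ t}) →
      ∀ x₁ ∈ {x ∈ X | ∑ i, c i * x i ≤ t}, ∀ x₂ ∈ {x ∈ X | ∑ i, c i * x i ≤ t},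
        IsMinOn Fhat {x ∈ X | ∑ i, c i * x i ≤ t} x₁ →
        IsMinOn Fhat {x ∈ X | ∑ i, c i * x i ≤ t} x₂ → x₁ = x₂ := by
  intro t hne hpos x₁ hx₁ x₂ hx₂ hmin₁ hmin₂
  have hp0 : p ≠ 0 := by positivity
  -- rewrite the objective with the constant grouped at the end
  have hFhat' : ∀ y : Fin n → ℝ, Fhat y =
      ∫ ζ, max ((∑ i, y i * ζ i) + (θ * (∑ i, |y i| ^ p) ^ (1 / p) - b₁)) 0 ∂P := by
    intro y
    rw [hFhat]
    congr 1
    funext ζ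
    congr 1
    ring
  -- continuity of the integrand
  have hcont : ∀ y : Fin n → ℝ, Continuous fun ζ : Fin n → ℝ =>
      max ((∑ i, y i * ζ i) + (θ * (∑ i, |y i| ^ p) ^ (1 / p) - b₁)) 0 := by
    intro y
    exact (((continuous_finset_sum _ fun i _ =>
      continuous_const.mul (continuous_apply i)).add continuous_const).max continuous_const)
  -- integrability of the integrand
  have hInt : ∀ y : Fin n → ℝ, Integrable (fun ζ =>
      max ((∑ i, y i * ζ i) + (θ * (∑ i, |y i| ^ p) ^ (1 / p) - b₁)) 0) P := by
    intro y
    refine Integrable.mono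
      ((integrable_const (|θ * (∑ i, |y i| ^ p) ^ (1 / p) - b₁|)).add
        (hPint.const_mul (∑ i, |y i|)))
      ((hcont y).aestronglyMeasurable)
      (Filter.Eventually.of_forall fun ζ => ?_)
    simp only [Pi.add_apply]
    have hd : |∑ i, y i * ζ i| ≤ (∑ i, |y i|) * ‖ζ‖ := by
      calc |∑ i, y i * ζ i| ≤ ∑ i, |y i * ζ i| := Finset.abs_sum_le_sum_abs _ _
        _ ≤ ∑ i, |y i| * ‖ζ‖ := Finset.sum_le_sum fun i _ => by
            rw [abs_mul]
            exact mul_le_mul_of_nonneg_left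
              (by simpa [Real.norm_eq_abs] using norm_le_pi_norm ζ i) (abs_nonneg _)
        _ = (∑ i, |y i|) * ‖ζ‖ := by rw [Finset.sum_mul]
    have h0 : 0 ≤ (∑ i, |y i|) * ‖ζ‖ :=
      mul_nonneg (Finset.sum_nonneg fun i _ => abs_nonneg _) (norm_nonneg _)
    rw [Real.norm_eq_abs, Real.norm_eq_abs,
      abs_of_nonneg (le_max_right _ _),
      abs_of_nonneg (by positivity)]
    refine max_le ?_ (by positivity)
    have h1 := le_abs_self (θ * (∑ i, |y i| ^ p) ^ (1 / p) - b₁)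
    have h2 := (le_abs_self (∑ i, y i * ζ i)).trans hd
    linarith
  -- the midpoint
  obtain ⟨m, hm⟩ : ∃ m : Fin n → ℝ, m = fun i => (x₁ i + x₂ i) / 2 := ⟨_, rfl⟩
  have hmi : ∀ i, m i = (x₁ i + x₂ i) / 2 := fun i => by rw [hm]
  have hmX : m ∈ X := by
    have h := hX hx₁.1 hx₂.1 (by norm_num : (0:ℝ) ≤ 1/2)
      (by norm_num : (0:ℝ) ≤ 1/2) (by norm_num)
    have e : (1/2 : ℝ) • x₁ + (1/2 : ℝ) • x₂ = m := by
      funext i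
      simp [hmi i, Pi.smul_apply, smul_eq_mul]
      ring
    rwa [e] at h
  have hmc : ∑ i, c i * m i ≤ t := by
    have e : ∑ i, c i * m i = ((∑ i, c i * x₁ i) + ∑ i, c i * x₂ i) / 2 := by
      rw [← Finset.sum_add_distrib, Finset.sum_div]
      exact Finset.sum_congr rfl fun i _ => by rw [hmi i]; ring
    rw [e]
    linarith [hx₁.2, hx₂.2]
  have hmS : m ∈ {x ∈ X | ∑ i, c i * x i ≤ t} := ⟨hmX, hmc⟩
  -- objective values: all equal
  have h12 : Fhat x₂ = Fhat x₁ :=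
    le_antisymm (isMinOn_iff.mp hmin₂ x₁ hx₁) (isMinOn_iff.mp hmin₁ x₂ hx₂)
  -- Minkowski for the p-norm
  have hNm : (∑ i, |m i| ^ p) ^ (1/p)
      ≤ ((∑ i, |x₁ i| ^ p) ^ (1/p) + (∑ i, |x₂ i| ^ p) ^ (1/p)) / 2 := by
    have hsum : (∑ i, |m i| ^ p) = (∑ i, |x₁ i + x₂ i| ^ p) / 2 ^ p := by
      rw [Finset.sum_div]
      refine Finset.sum_congr rfl fun i _ => ?_
      rw [hmi i, abs_div, abs_two, Real.div_rpow (abs_nonneg _) (by norm_num)]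
    have h2p : ((2:ℝ) ^ p) ^ (1/p) = 2 := by
      rw [← Real.rpow_mul (by norm_num : (0:ℝ) ≤ 2), mul_one_div_cancel hp0,
        Real.rpow_one]
    have hsplit : (∑ i, |m i| ^ p) ^ (1/p)
        = (∑ i, |x₁ i + x₂ i| ^ p) ^ (1/p) / 2 := by
      rw [hsum, Real.div_rpow (Finset.sum_nonneg fun i _ =>
        Real.rpow_nonneg (abs_nonneg _) p) (by positivity), h2p]
    rw [hsplit]
    have := Real.Lp_add_le Finset.univ x₁ x₂ hp.le
    linarith
  -- pointwise convexity inequality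
  have harg : ∀ ζ : Fin n → ℝ,
      (∑ i, m i * ζ i) + (θ * (∑ i, |m i| ^ p) ^ (1 / p) - b₁)
        ≤ (((∑ i, x₁ i * ζ i) + (θ * (∑ i, |x₁ i| ^ p) ^ (1 / p) - b₁))
          + ((∑ i, x₂ i * ζ i) + (θ * (∑ i, |x₂ i| ^ p) ^ (1 / p) - b₁))) / 2 := by
    intro ζ
    have hdm : (∑ i, m i * ζ i) = ((∑ i, x₁ i * ζ i) + ∑ i, x₂ i * ζ i) / 2 := by
      rw [← Finset.sum_add_distrib, Finset.sum_div]
      exact Finset.sum_congr rfl fun i _ => by rw [hmi i]; ring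
    have hθN := mul_le_mul_of_nonneg_left hNm hθ
    rw [hdm]
    linarith
  have hpt : ∀ ζ : Fin n → ℝ,
      max ((∑ i, m i * ζ i) + (θ * (∑ i, |m i| ^ p) ^ (1 / p) - b₁)) 0
        ≤ (max ((∑ i, x₁ i * ζ i) + (θ * (∑ i, |x₁ i| ^ p) ^ (1 / p) - b₁)) 0
          + max ((∑ i, x₂ i * ζ i) + (θ * (∑ i, |x₂ i| ^ p) ^ (1 / p) - b₁)) 0) / 2 := by
    intro ζ
    exact le_trans (max_le_max (harg ζ) le_rfl) (maxHalf _ _)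
  -- integral comparison
  have hplus : Fhat x₁ + Fhat x₂
      = ∫ ζ, (max ((∑ i, x₁ i * ζ i) + (θ * (∑ i, |x₁ i| ^ p) ^ (1 / p) - b₁)) 0
          + max ((∑ i, x₂ i * ζ i) + (θ * (∑ i, |x₂ i| ^ p) ^ (1 / p) - b₁)) 0) ∂P := by
    rw [hFhat' x₁, hFhat' x₂]
    exact (integral_add (hInt x₁) (hInt x₂)).symm
  have hI12 : Integrable (fun ζ =>
      (max ((∑ i, x₁ i * ζ i) + (θ * (∑ i, |x₁ i| ^ p) ^ (1 / p) - b₁)) 0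
        + max ((∑ i, x₂ i * ζ i) + (θ * (∑ i, |x₂ i| ^ p) ^ (1 / p) - b₁)) 0) / 2) P :=
    ((hInt x₁).add (hInt x₂)).div_const 2
  have hle : Fhat m ≤ (Fhat x₁ + Fhat x₂) / 2 := by
    rw [hFhat' m, hplus, ← integral_div]
    exact integral_mono (hInt m) hI12 hpt
  have hFm : Fhat m = Fhat x₁ :=
    le_antisymm (by linarith) (isMinOn_iff.mp hmin₁ m hmS)
  -- the gap function is a.e. zero, hence (by continuity and positivity of ρ) zero
  have hint_g : Integrable (fun ζ =>
      (max ((∑ i, x₁ i * ζ i) + (θ * (∑ i, |x₁ i| ^ p) ^ (1 / p) - b₁)) 0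
        + max ((∑ i, x₂ i * ζ i) + (θ * (∑ i, |x₂ i| ^ p) ^ (1 / p) - b₁)) 0) / 2
      - max ((∑ i, m i * ζ i) + (θ * (∑ i, |m i| ^ p) ^ (1 / p) - b₁)) 0) P :=
    (((hInt x₁).add (hInt x₂)).div_const 2).sub (hInt m)
  have hzero : (∫ ζ,
      ((max ((∑ i, x₁ i * ζ i) + (θ * (∑ i, |x₁ i| ^ p) ^ (1 / p) - b₁)) 0
        + max ((∑ i, x₂ i * ζ i) + (θ * (∑ i, |x₂ i| ^ p) ^ (1 / p) - b₁)) 0) / 2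
      - max ((∑ i, m i * ζ i) + (θ * (∑ i, |m i| ^ p) ^ (1 / p) - b₁)) 0) ∂P) = 0 := by
    rw [integral_sub hI12 (hInt m), integral_div, ← hplus, ← hFhat' m, hFm, h12]
    ring
  have hae := (integral_eq_zero_iff_of_nonneg
    (fun ζ => sub_nonneg.mpr (hpt ζ)) hint_g).mp hzero
  have hmeas : Measurable fun z : Fin n → ℝ => ENNReal.ofReal (ρ z) :=
    hρc.measurable.ennreal_ofReal
  have hae2 : ∀ᵐ ζ ∂(volume.withDensity fun z : Fin n → ℝ => ENNReal.ofReal (ρ z)),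
      (max ((∑ i, x₁ i * ζ i) + (θ * (∑ i, |x₁ i| ^ p) ^ (1 / p) - b₁)) 0
        + max ((∑ i, x₂ i * ζ i) + (θ * (∑ i, |x₂ i| ^ p) ^ (1 / p) - b₁)) 0) / 2
      - max ((∑ i, m i * ζ i) + (θ * (∑ i, |m i| ^ p) ^ (1 / p) - b₁)) 0 = 0 := by
    rw [← hPd]
    filter_upwards [hae] with ζ h using h
  rw [ae_withDensity_iff hmeas] at hae2
  have hae3 : ∀ᵐ ζ ∂(volume : Measure (Fin n → ℝ)),
      (max ((∑ i, x₁ i * ζ i) + (θ * (∑ i, |x₁ i| ^ p) ^ (1 / p) - b₁)) 0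
        + max ((∑ i, x₂ i * ζ i) + (θ * (∑ i, |x₂ i| ^ p) ^ (1 / p) - b₁)) 0) / 2
      - max ((∑ i, m i * ζ i) + (θ * (∑ i, |m i| ^ p) ^ (1 / p) - b₁)) 0 = 0 :=
    hae2.mono fun ζ h => h (ENNReal.ofReal_pos.mpr (hρpos ζ)).ne'
  have hgcont : Continuous fun ζ : Fin n → ℝ =>
      (max ((∑ i, x₁ i * ζ i) + (θ * (∑ i, |x₁ i| ^ p) ^ (1 / p) - b₁)) 0
        + max ((∑ i, x₂ i * ζ i) + (θ * (∑ i, |x₂ i| ^ p) ^ (1 / p) - b₁)) 0) / 2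
      - max ((∑ i, m i * ζ i) + (θ * (∑ i, |m i| ^ p) ^ (1 / p) - b₁)) 0 :=
    (((hcont x₁).add (hcont x₂)).div_const 2).sub (hcont m)
  have hgeq : (fun ζ : Fin n → ℝ =>
      (max ((∑ i, x₁ i * ζ i) + (θ * (∑ i, |x₁ i| ^ p) ^ (1 / p) - b₁)) 0
        + max ((∑ i, x₂ i * ζ i) + (θ * (∑ i, |x₂ i| ^ p) ^ (1 / p) - b₁)) 0) / 2
      - max ((∑ i, m i * ζ i) + (θ * (∑ i, |m i| ^ p) ^ (1 / p) - b₁)) 0)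
      = fun _ => (0:ℝ) :=
    (Continuous.ae_eq_iff_eq volume hgcont continuous_const).mp
      (hae3.mono fun ζ h => by simpa using h)
  -- extract the pointwise sign condition
  have hC : ∀ ζ : Fin n → ℝ,
      (0 ≤ (∑ i, x₁ i * ζ i) + (θ * (∑ i, |x₁ i| ^ p) ^ (1 / p) - b₁)
        ∧ 0 ≤ (∑ i, x₂ i * ζ i) + (θ * (∑ i, |x₂ i| ^ p) ^ (1 / p) - b₁))
      ∨ ((∑ i, x₁ i * ζ i) + (θ * (∑ i, |x₁ i| ^ p) ^ (1 / p) - b₁) ≤ 0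
        ∧ (∑ i, x₂ i * ζ i) + (θ * (∑ i, |x₂ i| ^ p) ^ (1 / p) - b₁) ≤ 0) := by
    intro ζ
    have e0 := congrFun hgeq ζ
    beta_reduce at e0
    have e1 : max ((∑ i, m i * ζ i) + (θ * (∑ i, |m i| ^ p) ^ (1 / p) - b₁)) 0
        ≤ max ((((∑ i, x₁ i * ζ i) + (θ * (∑ i, |x₁ i| ^ p) ^ (1 / p) - b₁))
          + ((∑ i, x₂ i * ζ i) + (θ * (∑ i, |x₂ i| ^ p) ^ (1 / p) - b₁))) / 2) 0 :=
      max_le_max (harg ζ) le_rfl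
    have e2 := maxHalf ((∑ i, x₁ i * ζ i) + (θ * (∑ i, |x₁ i| ^ p) ^ (1 / p) - b₁))
      ((∑ i, x₂ i * ζ i) + (θ * (∑ i, |x₂ i| ^ p) ^ (1 / p) - b₁))
    exact signOfMaxEq (maxHalfEq (by linarith))
  -- positivity of the optimal value
  have hvpos : 0 < Fhat x₁ := by
    have hbdd : BddBelow (Fhat '' {x ∈ X | ∑ i, c i * x i ≤ t}) := by
      refine ⟨0, fun y hy => ?_⟩
      obtain ⟨x, _, rfl⟩ := hy
      rw [hFhat x]
      exact integral_nonneg fun ζ => le_max_right _ _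
    have := csInf_le hbdd ⟨x₁, hx₁, rfl⟩
    linarith
  -- conclude via the geometric lemma
  refine signForcesEq P x₁ x₂
    (θ * (∑ i, |x₁ i| ^ p) ^ (1 / p) - b₁)
    (θ * (∑ i, |x₂ i| ^ p) ^ (1 / p) - b₁) hC ?_ ?_
  · rw [← hFhat' x₁]; exact hvpos
  · rw [← hFhat' x₁, ← hFhat' x₂]; exact h12.symm
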